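/- Under the parameter constraints of Theorem 4.1 (β₂₂ < β₁₁ < 0, β₂₃ > 0, ρ₂ > 0, β₁₃ = 8ρ₂/(β₁₁−β₂₂) + β₂₃ − 2β₂₂, β₃₃ = β₁₁ + β₂₂ − (β₁₃+β₂₃)/2, ρ₁ = (β₁₁−β₂₂)(β₁₃−β₂₃−2β₁₁)/8), the solutions B₁, B₂, B₃ of the Riccati system B₁' = −B₁² + β₁₁B₁ + ρ₁, B₂' = −B₂² + β₂₂B₂ + ρ₂, B₃' = −B₃² + β₁₃B₁ + β₂₃B₂ + β₃₃B₃ + ρ₁ + ρ₂, all with initial value 0, satisfy B₃(τ) = B₁(τ) + B₂(τ) for all τ ≥ 0. -/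

import Mathlib

open Set

lemma riccati_uniq (a : ℝ) (r f g : ℝ → ℝ)
    (hf : ∀ t ∈ Ici (0:ℝ), HasDerivWithinAt f (-(f t)^2 + a * f t + r t) (Ici 0) t)
    (hg : ∀ t ∈ Ici (0:ℝ), HasDerivWithinAt g (-(g t)^2 + a * g t + r t) (Ici 0) t)
    (h0 : f 0 = g 0) : ∀ t : ℝ, 0 ≤ t → f t = g t := by
  intro T hT
  set d : ℝ → ℝ := fun t => f t - g t with hd
  have hfc : ContinuousOn f (Icc 0 T) := fun t ht =>
    ((hf t ht.1).continuousWithinAt).mono Icc_subset_Ici_self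
  have hgc : ContinuousOn g (Icc 0 T) := fun t ht =>
    ((hg t ht.1).continuousWithinAt).mono Icc_subset_Ici_self
  have hcomp : IsCompact (Icc (0:ℝ) T) := isCompact_Icc
  obtain ⟨K, hK⟩ := hcomp.exists_bound_of_continuousOn
    (f := fun t => a - f t - g t)
    (by fun_prop (disch := assumption))
  have hd' : ∀ t ∈ Ico (0:ℝ) T,
      HasDerivWithinAt d ((a - f t - g t) * d t) (Ici t) t := by
    intro t ht
    have := ((hf t ht.1).sub (hg t ht.1)).mono (Ici_subset_Ici.mpr ht.1)
    refine HasDerivWithinAt.congr_deriv this ?_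
    simp only [hd]; ring
  have hdc : ContinuousOn d (Icc 0 T) := hfc.sub hgc
  have := norm_le_gronwallBound_of_norm_deriv_right_le (δ := 0) (K := K) (ε := 0)
    hdc hd' (by simp [hd, h0]) ?_
  · have hT' := this T (by simp [hT])
    simp [gronwallBound_ε0] at hT'
    have : d T = 0 := by
      have := abs_nonneg (d T)
      have h2 : |d T| ≤ 0 := by simpa using hT'
      have := abs_eq_zero.mp (le_antisymm h2 (abs_nonneg _))
      exact this
    simpa [hd, sub_eq_zero] using this
  · intro t ht
    have h1 := hK t (Ico_subset_Icc_self ht)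
    simp only [Real.norm_eq_abs] at *
    rw [abs_mul]
    have : |a - f t - g t| * |d t| ≤ K * |d t| :=
      mul_le_mul_of_nonneg_right h1 (abs_nonneg _)
    linarith
open Set

noncomputable def phi (β ρ θ τ : ℝ) : ℝ :=
  2*ρ*(Real.exp (θ*τ) - 1) / ((θ-β)*(Real.exp (θ*τ)-1) + 2*θ)

lemma phi_zero (β ρ θ : ℝ) : phi β ρ θ 0 = 0 := by simp [phi]

lemma phi_denom_pos {β θ : ℝ} (hθ : 0 < θ) (hβ : β < θ) {τ : ℝ} (hτ : 0 ≤ τ) :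
    0 < (θ-β)*(Real.exp (θ*τ)-1) + 2*θ := by
  have : 1 ≤ Real.exp (θ*τ) := Real.one_le_exp (by positivity)
  nlinarith

lemma phi_deriv {β ρ θ : ℝ} (hθ : 0 < θ) (hβ : β < θ) (hθ2 : θ^2 = β^2 + 4*ρ)
    {τ : ℝ} (hτ : 0 ≤ τ) :
    HasDerivAt (phi β ρ θ) (-(phi β ρ θ τ)^2 + β * phi β ρ θ τ + ρ) τ := by
  have hD := phi_denom_pos hθ hβ hτ
  have he : HasDerivAt (fun t => Real.exp (θ*t)) (θ * Real.exp (θ*τ)) τ := by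
    simpa [mul_comm] using (HasDerivAt.exp ((hasDerivAt_id τ).const_mul θ))
  have hn : HasDerivAt (fun t => 2*ρ*(Real.exp (θ*t) - 1)) (2*ρ*(θ*Real.exp (θ*τ))) τ :=
    (he.sub_const 1).const_mul (2*ρ)
  have hdd : HasDerivAt (fun t => (θ-β)*(Real.exp (θ*t)-1) + 2*θ)
      ((θ-β)*(θ*Real.exp (θ*τ))) τ := ((he.sub_const 1).const_mul (θ-β)).add_const (2*θ)
  have hq := hn.div hdd hD.ne'
  refine hq.congr_deriv ?_
  unfold phi
  have hDne : ((θ-β)*(Real.exp (θ*τ)-1) + 2*θ) ≠ 0 := hD.ne'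
  set E := Real.exp (θ*τ) - 1 with hE
  set D := (θ-β)*E + 2*θ with hDdef
  have h9 : 2*ρ*(θ*Real.exp (θ*τ)) * D - 2*ρ*E*((θ-β)*(θ*Real.exp (θ*τ)))
      = -(2*ρ*E)^2 + β*(2*ρ*E)*D + ρ*D^2 := by
    rw [hDdef, hE]; linear_combination (-(ρ*(Real.exp (θ*τ)-1)^2)) * hθ2
  rw [h9]
  field_simp

lemma key_id (β₁ β₂ ρ₁ ρ₂ θ c₁ c₂ : ℝ) (hθ : 0 < θ) (hβ₁ : β₁ < θ) (hβ₂ : β₂ < θ)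
    (fA : c₁*ρ₁ + c₂*ρ₂ = 0) (fB : β₂*(c₁*ρ₁) + β₁*(c₂*ρ₂) = -(4*ρ₁*ρ₂))
    {t : ℝ} (ht : 0 ≤ t) :
    2 * phi β₁ ρ₁ θ t * phi β₂ ρ₂ θ t = c₁ * phi β₁ ρ₁ θ t + c₂ * phi β₂ ρ₂ θ t := by
  have hD₁ := phi_denom_pos hθ hβ₁ ht
  have hD₂ := phi_denom_pos hθ hβ₂ ht
  unfold phi
  set E := Real.exp (θ*t) - 1 with hE
  field_simp
  have h₁ : E * (θ - β₁) + 2 * θ ≠ 0 := by rw [mul_comm]; exact hD₁.ne'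
  have h₂ : E * (θ - β₂) + 2 * θ ≠ 0 := by rw [mul_comm]; exact hD₂.ne'
  field_simp
  linear_combination (-(E^2*θ + 2*E*θ)) * fA + (E^2) * fB

/-- Under the parameter constraints of Theorem 4.1, the solutions `B₁, B₂, B₃` of the
Riccati system (with zero initial values) satisfy `B₃ = B₁ + B₂` on `[0, ∞)`. -/
theorem stmt_13 (β₁₁ β₂₂ β₂₃ ρ₂ β₁₃ β₃₃ ρ₁ : ℝ)
    (h1 : β₂₂ < β₁₁) (h2 : β₁₁ < 0) (h3 : 0 < β₂₃) (h4 : 0 < ρ₂)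
    (h5 : β₁₃ = 8 * ρ₂ / (β₁₁ - β₂₂) + β₂₃ - 2 * β₂₂)
    (h6 : β₃₃ = β₁₁ + β₂₂ - (β₁₃ + β₂₃) / 2)
    (h7 : ρ₁ = (β₁₁ - β₂₂) * (β₁₃ - β₂₃ - 2 * β₁₁) / 8)
    (B₁ B₂ B₃ : ℝ → ℝ)
    (hB₁0 : B₁ 0 = 0) (hB₂0 : B₂ 0 = 0) (hB₃0 : B₃ 0 = 0)
    (hB₁ : ∀ τ ∈ Set.Ici (0 : ℝ),
      HasDerivWithinAt B₁ (-(B₁ τ) ^ 2 + β₁₁ * B₁ τ + ρ₁) (Set.Ici 0) τ)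
    (hB₂ : ∀ τ ∈ Set.Ici (0 : ℝ),
      HasDerivWithinAt B₂ (-(B₂ τ) ^ 2 + β₂₂ * B₂ τ + ρ₂) (Set.Ici 0) τ)
    (hB₃ : ∀ τ ∈ Set.Ici (0 : ℝ),
      HasDerivWithinAt B₃
        (-(B₃ τ) ^ 2 + β₁₃ * B₁ τ + β₂₃ * B₂ τ + β₃₃ * B₃ τ + ρ₁ + ρ₂)
        (Set.Ici 0) τ) :
    ∀ τ : ℝ, 0 ≤ τ → B₃ τ = B₁ τ + B₂ τ := by
  have hΔ : (0:ℝ) < β₁₁ - β₂₂ := sub_pos.mpr h1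
  have hΔ' : β₁₁ - β₂₂ ≠ 0 := hΔ.ne'
  have hρ₁ : ρ₁ = ρ₂ - (β₁₁ - β₂₂) * (β₁₁ + β₂₂) / 4 := by
    rw [h7, h5]; field_simp; ring
  have hρ₁pos : 0 < ρ₁ := by nlinarith
  have hpos : (0:ℝ) < β₂₂^2 + 4*ρ₂ := by nlinarith
  set θ := Real.sqrt (β₂₂^2 + 4*ρ₂) with hθdef
  have hθ2 : θ^2 = β₂₂^2 + 4*ρ₂ := Real.sq_sqrt hpos.le
  have hθpos : 0 < θ := Real.sqrt_pos.mpr hpos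
  have hθ1 : θ^2 = β₁₁^2 + 4*ρ₁ := by rw [hθ2, hρ₁]; ring
  have hβ₁θ : β₁₁ < θ := h2.trans hθpos
  have hβ₂θ : β₂₂ < θ := (h1.trans h2).trans hθpos
  -- B₁ = φ₁, B₂ = φ₂
  have hB₁eq : ∀ t : ℝ, 0 ≤ t → B₁ t = phi β₁₁ ρ₁ θ t :=
    riccati_uniq β₁₁ (fun _ => ρ₁) B₁ (phi β₁₁ ρ₁ θ) hB₁
      (fun t ht => (phi_deriv hθpos hβ₁θ hθ1 ht).hasDerivWithinAt)
      (by rw [hB₁0, phi_zero])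
  have hB₂eq : ∀ t : ℝ, 0 ≤ t → B₂ t = phi β₂₂ ρ₂ θ t :=
    riccati_uniq β₂₂ (fun _ => ρ₂) B₂ (phi β₂₂ ρ₂ θ) hB₂
      (fun t ht => (phi_deriv hθpos hβ₂θ hθ2 ht).hasDerivWithinAt)
      (by rw [hB₂0, phi_zero])
  -- scalar parameter identities
  have fA : (β₁₃ + β₃₃ - β₁₁)*ρ₁ + (β₂₃ + β₃₃ - β₂₂)*ρ₂ = 0 := by
    rw [hρ₁, h6, h5]; field_simp; ring
  have fB : β₂₂*((β₁₃ + β₃₃ - β₁₁)*ρ₁) + β₁₁*((β₂₃ + β₃₃ - β₂₂)*ρ₂) = -(4*ρ₁*ρ₂) := by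
    rw [hρ₁, h6, h5]; field_simp; ring
  -- key pointwise identity for B₁, B₂
  have key : ∀ t : ℝ, 0 ≤ t →
      2 * B₁ t * B₂ t = (β₁₃ + β₃₃ - β₁₁) * B₁ t + (β₂₃ + β₃₃ - β₂₂) * B₂ t := by
    intro t ht
    rw [hB₁eq t ht, hB₂eq t ht]
    exact key_id β₁₁ β₂₂ ρ₁ ρ₂ θ _ _ hθpos hβ₁θ hβ₂θ fA fB ht
  -- final uniqueness
  exact riccati_uniq β₃₃ (fun t => β₁₃ * B₁ t + β₂₃ * B₂ t + ρ₁ + ρ₂) B₃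
    (fun t => B₁ t + B₂ t)
    (fun t ht => by
      have := hB₃ t ht
      convert this using 1
      ring)
    (fun t ht => by
      have h := (hB₁ t ht).add (hB₂ t ht)
      refine h.congr_deriv ?_
      have hk := key t ht
      ring_nf
      ring_nf at hk
      linarith)
    (by simp [hB₃0, hB₁0, hB₂0])
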